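/- Let Ω be a tangent space to the sparse-matrix variety and T a tangent space to the low-rank matrix variety (at a nonzero matrix), let γ > 0, 𝒴 = Ω × T, and χ(Ω,T,γ) = max{ξ(T)/γ, 2μ(Ω)γ}. If S ∈ Ω with ‖S‖∞ = γ and L ∈ T with ‖L‖₂ = 1, then g_γ(𝒫_𝒴 𝒜† 𝒜 𝒫_𝒴 (S,L)) ∈ [1 − χ(Ω,T,γ), 1 + χ(Ω,T,γ)]. -/

import Mathlib

open Matrix MeasureTheory
open scoped Classical

noncomputable section

namespace LVGGM

variable {p h : ℕ}

/-- Spectral norm (largest singular value) of a real square matrix. -/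
def specNorm (M : Matrix (Fin p) (Fin p) ℝ) : ℝ :=
  ‖Matrix.toEuclideanCLM (𝕜 := ℝ) M‖

/-- Entrywise max norm `‖M‖_∞`. -/
def maxNorm (M : Matrix (Fin p) (Fin p) ℝ) : ℝ :=
  ⨆ i, ⨆ j, |M i j|

/-- Entrywise ℓ₁ norm `‖M‖₁`. -/
def l1Norm (M : Matrix (Fin p) (Fin p) ℝ) : ℝ :=
  ∑ i, ∑ j, |M i j|

/-- The matrix of the orthogonal projection of ℝ^p onto the column space of `M`. -/
def colProj (M : Matrix (Fin p) (Fin p) ℝ) : Matrix (Fin p) (Fin p) ℝ :=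
  LinearMap.toMatrix (EuclideanSpace.basisFun (Fin p) ℝ).toBasis
    (EuclideanSpace.basisFun (Fin p) ℝ).toBasis
    ((LinearMap.range (Matrix.toEuclideanLin M)).subtype ∘ₗ
      (Submodule.orthogonalProjectionOnto (LinearMap.range (Matrix.toEuclideanLin M))).toLinearMap)

/-- Singular values of a matrix, as square roots of eigenvalues of `Mᴴ M`. -/
def singVals (M : Matrix (Fin p) (Fin p) ℝ) (i : Fin p) : ℝ :=
  Real.sqrt ((Matrix.posSemidef_conjTranspose_mul_self M).1.eigenvalues i)

/-! ### Sparse tangent spaces -/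

/-- Tangent space to the variety of sparse matrices at `M₀`. -/
def OmegaSet (M₀ : Matrix (Fin p) (Fin p) ℝ) : Set (Matrix (Fin p) (Fin p) ℝ) :=
  {N | ∀ i j, M₀ i j = 0 → N i j = 0}

/-- Orthogonal projection onto `OmegaSet M₀`. -/
def projOmega (M₀ N : Matrix (Fin p) (Fin p) ℝ) : Matrix (Fin p) (Fin p) ℝ :=
  Matrix.of fun i j => if M₀ i j = 0 then 0 else N i j

/-- Orthogonal projection onto the orthogonal complement of `OmegaSet M₀`. -/
def projOmegaPerp (M₀ N : Matrix (Fin p) (Fin p) ℝ) : Matrix (Fin p) (Fin p) ℝ :=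
  Matrix.of fun i j => if M₀ i j = 0 then N i j else 0

/-- `μ(Ω(M₀))`: max spectral norm over the `‖·‖_∞`-unit ball of `Ω(M₀)`. -/
def muOmega (M₀ : Matrix (Fin p) (Fin p) ℝ) : ℝ :=
  ⨆ N : {N : Matrix (Fin p) (Fin p) ℝ // N ∈ OmegaSet M₀ ∧ maxNorm N ≤ 1}, specNorm N.1

/-! ### Low-rank tangent spaces (symmetric version) -/

/-- `𝒫_{T(M)}` for symmetric `M`: `N ↦ P N + N P − P N P` with `P` the column-space projector. -/
def projTsym (M N : Matrix (Fin p) (Fin p) ℝ) : Matrix (Fin p) (Fin p) ℝ :=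
  colProj M * N + N * colProj M - colProj M * N * colProj M

/-- `𝒫_{T(M)^⊥}` for symmetric `M`: `N ↦ (I−P) N (I−P)`. -/
def projTsymPerp (M N : Matrix (Fin p) (Fin p) ℝ) : Matrix (Fin p) (Fin p) ℝ :=
  (1 - colProj M) * N * (1 - colProj M)

/-- Tangent space to the variety of symmetric low-rank matrices at symmetric `M`. -/
def TsetSym (M : Matrix (Fin p) (Fin p) ℝ) : Set (Matrix (Fin p) (Fin p) ℝ) :=
  {N | N.IsHermitian ∧ projTsymPerp M N = 0}

/-- `ξ(T(M))` (symmetric version). -/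
def xiT (M : Matrix (Fin p) (Fin p) ℝ) : ℝ :=
  ⨆ N : {N : Matrix (Fin p) (Fin p) ℝ // N ∈ TsetSym M ∧ specNorm N ≤ 1}, maxNorm N.1

/-- `ρ(T(M₁), T(M₂))` (symmetric version). -/
def rhoSym (M₁ M₂ : Matrix (Fin p) (Fin p) ℝ) : ℝ :=
  ⨆ N : {N : Matrix (Fin p) (Fin p) ℝ // specNorm N ≤ 1},
    specNorm (projTsym M₁ N.1 - projTsym M₂ N.1)

/-! ### Low-rank tangent spaces (general version) -/

/-- `𝒫_{T(M)}` for general `M`: `N ↦ P_U N + N P_V − P_U N P_V`. -/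
def projTgen (M N : Matrix (Fin p) (Fin p) ℝ) : Matrix (Fin p) (Fin p) ℝ :=
  colProj M * N + N * colProj Mᵀ - colProj M * N * colProj Mᵀ

/-- `𝒫_{T(M)^⊥}` for general `M`. -/
def projTgenPerp (M N : Matrix (Fin p) (Fin p) ℝ) : Matrix (Fin p) (Fin p) ℝ :=
  (1 - colProj M) * N * (1 - colProj Mᵀ)

/-- Tangent space to the variety of low-rank matrices at a general matrix `M`. -/
def TsetGen (M : Matrix (Fin p) (Fin p) ℝ) : Set (Matrix (Fin p) (Fin p) ℝ) :=
  {N | projTgenPerp M N = 0}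

/-- `ξ(T(M))` (general version). -/
def xiGen (M : Matrix (Fin p) (Fin p) ℝ) : ℝ :=
  ⨆ N : {N : Matrix (Fin p) (Fin p) ℝ // N ∈ TsetGen M ∧ specNorm N ≤ 1}, maxNorm N.1

/-- Euclidean norm of the `i`-th column of `P`, i.e. `‖P e_i‖`. -/
def colEucNorm (P : Matrix (Fin p) (Fin p) ℝ) (i : Fin p) : ℝ :=
  Real.sqrt (∑ j, (P j i) ^ 2)

/-- Incoherence `inc(M)` of the row/column spaces of `M`. -/
def inc (M : Matrix (Fin p) (Fin p) ℝ) : ℝ :=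
  max (⨆ i, colEucNorm (colProj M) i) (⨆ i, colEucNorm (colProj Mᵀ) i)

/-! ### Orthogonal projections onto arbitrary subspaces of matrices -/

/-- Matrices as vectors in the Euclidean space of entries (trace inner product). -/
def toELin : Matrix (Fin p) (Fin p) ℝ →ₗ[ℝ] EuclideanSpace ℝ (Fin p × Fin p) where
  toFun M := WithLp.toLp 2 (fun q => M q.1 q.2)
  map_add' _ _ := rfl
  map_smul' _ _ := rfl

/-- Orthogonal projection (trace inner product) onto a subspace of matrices. -/
def matProj (T : Submodule ℝ (Matrix (Fin p) (Fin p) ℝ)) (N : Matrix (Fin p) (Fin p) ℝ) :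
    Matrix (Fin p) (Fin p) ℝ :=
  Matrix.of fun i j => (Submodule.orthogonalProjectionOnto (T.map toELin) (toELin N) : EuclideanSpace ℝ (Fin p × Fin p)) (i, j)

/-- `ρ(T₁,T₂)` for arbitrary subspaces of matrices. -/
def rhoSub (T₁ T₂ : Submodule ℝ (Matrix (Fin p) (Fin p) ℝ)) : ℝ :=
  ⨆ N : {N : Matrix (Fin p) (Fin p) ℝ // specNorm N ≤ 1},
    specNorm (matProj T₁ N.1 - matProj T₂ N.1)

/-- `ξ(T)` for an arbitrary subspace of matrices. -/
def xiSub (T : Submodule ℝ (Matrix (Fin p) (Fin p) ℝ)) : ℝ :=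
  ⨆ N : {N : Matrix (Fin p) (Fin p) ℝ // N ∈ T ∧ specNorm N ≤ 1}, maxNorm N.1

/-! ### The dual norm g_γ -/

/-- `g_γ(S,L) = max(‖S‖_∞/γ, ‖L‖₂)`. -/
def gNorm (γ : ℝ) (S L : Matrix (Fin p) (Fin p) ℝ) : ℝ :=
  max (maxNorm S / γ) (specNorm L)

/-- `g_γ(𝒜†(M)) = max(‖M‖_∞/γ, ‖M‖₂)`. -/
def gA (γ : ℝ) (M : Matrix (Fin p) (Fin p) ℝ) : ℝ :=
  max (maxNorm M / γ) (specNorm M)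

/-! ### Latent-variable Fisher information setup -/

/-- `S* = K*_O`. -/
def Sstar (K : Matrix (Fin p ⊕ Fin h) (Fin p ⊕ Fin h) ℝ) : Matrix (Fin p) (Fin p) ℝ :=
  K.toBlocks₁₁

/-- `L* = K*_{O,H} (K*_H)⁻¹ K*_{H,O}`. -/
def Lstar (K : Matrix (Fin p ⊕ Fin h) (Fin p ⊕ Fin h) ℝ) : Matrix (Fin p) (Fin p) ℝ :=
  K.toBlocks₁₂ * (K.toBlocks₂₂)⁻¹ * K.toBlocks₂₁

/-- `K̃*_O = S* − L*` (Schur complement). -/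
def KtildeO (K : Matrix (Fin p ⊕ Fin h) (Fin p ⊕ Fin h) ℝ) : Matrix (Fin p) (Fin p) ℝ :=
  Sstar K - Lstar K

/-- `Σ*_O = (K̃*_O)⁻¹`. -/
def SigmaO (K : Matrix (Fin p ⊕ Fin h) (Fin p ⊕ Fin h) ℝ) : Matrix (Fin p) (Fin p) ℝ :=
  (KtildeO K)⁻¹

/-- `ψ = ‖Σ*_O‖₂`. -/
def psi (K : Matrix (Fin p ⊕ Fin h) (Fin p ⊕ Fin h) ℝ) : ℝ :=
  specNorm (SigmaO K)

/-- Fisher information operator `ℐ*(M) = Σ*_O M Σ*_O`. -/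
def Istar (K : Matrix (Fin p ⊕ Fin h) (Fin p ⊕ Fin h) ℝ) (M : Matrix (Fin p) (Fin p) ℝ) :
    Matrix (Fin p) (Fin p) ℝ :=
  SigmaO K * M * SigmaO K

/-- A nearby tangent space: `T' = T(M')` for a symmetric `M'` with the same rank as `Lst`
and `ρ(T',T(Lst)) ≤ ξ(T(Lst))/2`. -/
def Nearby (Lst M' : Matrix (Fin p) (Fin p) ℝ) : Prop :=
  M'.IsHermitian ∧ M'.rank = Lst.rank ∧ rhoSym M' Lst ≤ xiT Lst / 2

/-- `α_Ω`. -/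
def alphaOmega (K : Matrix (Fin p ⊕ Fin h) (Fin p ⊕ Fin h) ℝ) : ℝ :=
  ⨅ M : {M : Matrix (Fin p) (Fin p) ℝ // M ∈ OmegaSet (Sstar K) ∧ maxNorm M = 1},
    maxNorm (projOmega (Sstar K) (Istar K (projOmega (Sstar K) M.1)))

/-- `δ_Ω`. -/
def deltaOmega (K : Matrix (Fin p ⊕ Fin h) (Fin p ⊕ Fin h) ℝ) : ℝ :=
  ⨆ M : {M : Matrix (Fin p) (Fin p) ℝ // M ∈ OmegaSet (Sstar K) ∧ maxNorm M = 1},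
    maxNorm (projOmegaPerp (Sstar K) (Istar K (projOmega (Sstar K) M.1)))

/-- `β_Ω`. -/
def betaOmega (K : Matrix (Fin p ⊕ Fin h) (Fin p ⊕ Fin h) ℝ) : ℝ :=
  ⨆ M : {M : Matrix (Fin p) (Fin p) ℝ // M ∈ OmegaSet (Sstar K) ∧ specNorm M = 1},
    specNorm (Istar K M.1)

/-- `α_T`. -/
def alphaTC (K : Matrix (Fin p ⊕ Fin h) (Fin p ⊕ Fin h) ℝ) : ℝ :=
  ⨅ x : {x : Matrix (Fin p) (Fin p) ℝ × Matrix (Fin p) (Fin p) ℝ //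
      Nearby (Lstar K) x.1 ∧ x.2 ∈ TsetSym x.1 ∧ specNorm x.2 = 1},
    specNorm (projTsym x.1.1 (Istar K (projTsym x.1.1 x.1.2)))

/-- `δ_T`. -/
def deltaTC (K : Matrix (Fin p ⊕ Fin h) (Fin p ⊕ Fin h) ℝ) : ℝ :=
  ⨆ x : {x : Matrix (Fin p) (Fin p) ℝ × Matrix (Fin p) (Fin p) ℝ //
      Nearby (Lstar K) x.1 ∧ x.2 ∈ TsetSym x.1 ∧ specNorm x.2 = 1},
    specNorm (projTsymPerp x.1.1 (Istar K (projTsym x.1.1 x.1.2)))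

/-- `β_T`. -/
def betaTC (K : Matrix (Fin p ⊕ Fin h) (Fin p ⊕ Fin h) ℝ) : ℝ :=
  ⨆ x : {x : Matrix (Fin p) (Fin p) ℝ × Matrix (Fin p) (Fin p) ℝ //
      Nearby (Lstar K) x.1 ∧ x.2 ∈ TsetSym x.1 ∧ maxNorm x.2 = 1},
    maxNorm (Istar K x.1.2)

/-- `α = min(α_Ω, α_T)`. -/
def alphaC (K : Matrix (Fin p ⊕ Fin h) (Fin p ⊕ Fin h) ℝ) : ℝ :=
  min (alphaOmega K) (alphaTC K)

/-- `δ = max(δ_Ω, δ_T)`. -/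
def deltaC (K : Matrix (Fin p ⊕ Fin h) (Fin p ⊕ Fin h) ℝ) : ℝ :=
  max (deltaOmega K) (deltaTC K)

/-- `β = max(β_Ω, β_T)`. -/
def betaC (K : Matrix (Fin p ⊕ Fin h) (Fin p ⊕ Fin h) ℝ) : ℝ :=
  max (betaOmega K) (betaTC K)

/-! ### Probability: iid Gaussian samples and sample covariance -/

/-- The positive semidefinite square root of a positive semidefinite matrix (the former
`Matrix.PosSemidef.sqrt`, spelled out with its old definition). -/
def psdSqrt {A : Matrix (Fin p) (Fin p) ℝ} (hA : A.PosSemidef) : Matrix (Fin p) (Fin p) ℝ :=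
  hA.1.eigenvectorUnitary.1 * diagonal ((↑) ∘ (Real.sqrt ·) ∘ hA.1.eigenvalues) *
    (star hA.1.eigenvectorUnitary : Matrix (Fin p) (Fin p) ℝ)

/-- The joint law of `n` i.i.d. samples from `N(0, S)` on `ℝ^p`, realized by pushing forward
i.i.d. standard Gaussians through the positive-semidefinite square root of `S`. -/
def iidGaussian (n p : ℕ) (S : Matrix (Fin p) (Fin p) ℝ) : Measure (Fin n → Fin p → ℝ) :=
  if hS : S.PosSemidef then
    (Measure.pi fun _ : Fin n => Measure.pi fun _ : Fin p =>
        ProbabilityTheory.gaussianReal 0 1).map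
      (fun Z => fun i => (psdSqrt hS).mulVec (Z i))
  else 0

/-- Sample covariance matrix of samples `X 1, …, X n`. -/
def sampleCov {p n : ℕ} (X : Fin n → Fin p → ℝ) : Matrix (Fin p) (Fin p) ℝ :=
  (n : ℝ)⁻¹ • ∑ i, Matrix.vecMulVec (X i) (X i)

/-! ### Optimization programs -/

/-- Nuclear norm `‖M‖_*` (sum of singular values). -/
def nuclearNorm (M : Matrix (Fin p) (Fin p) ℝ) : ℝ :=
  (psdSqrt (Matrix.posSemidef_conjTranspose_mul_self M)).trace

/-- Objective of the program (sdp1): `tr((S−L)Σ) − log det(S−L) + λ(γ‖S‖₁ + tr(L))`. -/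
def objSDP1 (Sig : Matrix (Fin p) (Fin p) ℝ) (lam gam : ℝ)
    (S L : Matrix (Fin p) (Fin p) ℝ) : ℝ :=
  ((S - L) * Sig).trace - Real.log (S - L).det + lam * (gam * l1Norm S + L.trace)

/-- Feasibility for (sdp1): symmetric `S, L`, `S − L ≻ 0`, `L ⪰ 0`. -/
def FeasSDP1 (S L : Matrix (Fin p) (Fin p) ℝ) : Prop :=
  S.IsHermitian ∧ L.IsHermitian ∧ (S - L).PosDef ∧ L.PosSemidef

/-- `(S,L)` is an optimum of the program (sdp1). -/
def IsOptSDP1 (Sig : Matrix (Fin p) (Fin p) ℝ) (lam gam : ℝ)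
    (S L : Matrix (Fin p) (Fin p) ℝ) : Prop :=
  FeasSDP1 S L ∧ ∀ S' L', FeasSDP1 S' L' →
    objSDP1 Sig lam gam S L ≤ objSDP1 Sig lam gam S' L'

/-- Objective with the nuclear norm: `tr((S−L)Σ) − log det(S−L) + λ(γ‖S‖₁ + ‖L‖_*)`. -/
def objNuc (Sig : Matrix (Fin p) (Fin p) ℝ) (lam gam : ℝ)
    (S L : Matrix (Fin p) (Fin p) ℝ) : ℝ :=
  ((S - L) * Sig).trace - Real.log (S - L).det + lam * (gam * l1Norm S + nuclearNorm L)

/-- Feasibility for the tangent-space constrained program: symmetric, `S ∈ Ω(Sst)`,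
`L ∈ T(M')`, `S − L ≻ 0`. -/
def FeasTS (Sst M' : Matrix (Fin p) (Fin p) ℝ) (S L : Matrix (Fin p) (Fin p) ℝ) : Prop :=
  S.IsHermitian ∧ S ∈ OmegaSet Sst ∧ L ∈ TsetSym M' ∧ (S - L).PosDef

/-- Optimality for the tangent-space constrained program. -/
def IsOptTS (Sst M' Sig : Matrix (Fin p) (Fin p) ℝ) (lam gam : ℝ)
    (S L : Matrix (Fin p) (Fin p) ℝ) : Prop :=
  FeasTS Sst M' S L ∧ ∀ S' L', FeasTS Sst M' S' L' →
    objNuc Sig lam gam S L ≤ objNuc Sig lam gam S' L'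

/-- Feasibility for the unconstrained nuclear-norm program: symmetric, `S − L ≻ 0`. -/
def FeasSy (S L : Matrix (Fin p) (Fin p) ℝ) : Prop :=
  S.IsHermitian ∧ L.IsHermitian ∧ (S - L).PosDef

/-- Optimality for the unconstrained nuclear-norm program. -/
def IsOptSy (Sig : Matrix (Fin p) (Fin p) ℝ) (lam gam : ℝ)
    (S L : Matrix (Fin p) (Fin p) ℝ) : Prop :=
  FeasSy S L ∧ ∀ S' L', FeasSy S' L' →
    objNuc Sig lam gam S L ≤ objNuc Sig lam gam S' L'

/-! ### Spectral projectors and inertia -/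

/-- Orthogonal projection onto the direct sum of the eigenspaces of a symmetric matrix `A`
corresponding to eigenvalues of magnitude less than `η`. -/
def spectralProjLT (A : Matrix (Fin p) (Fin p) ℝ) (η : ℝ) : Matrix (Fin p) (Fin p) ℝ :=
  if hA : A.IsHermitian then
    ∑ i ∈ Finset.univ.filter (fun i => |hA.eigenvalues i| < η),
      Matrix.vecMulVec (fun j => hA.eigenvectorBasis i j) (fun j => hA.eigenvectorBasis i j)
  else 0

/-- `t` is an eigenvalue of `A`. -/
def hasEigval (A : Matrix (Fin p) (Fin p) ℝ) (t : ℝ) : Prop :=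
  ∃ v : Fin p → ℝ, v ≠ 0 ∧ A.mulVec v = t • v

/-- Inertia (numbers of positive, negative, and zero eigenvalues) of a symmetric matrix. -/
def inertia (M : Matrix (Fin p) (Fin p) ℝ) : ℕ × ℕ × ℕ :=
  if hM : M.IsHermitian then
    ((Finset.univ.filter fun i => 0 < hM.eigenvalues i).card,
     (Finset.univ.filter fun i => hM.eigenvalues i < 0).card,
     (Finset.univ.filter fun i => hM.eigenvalues i = 0).card)
  else (0, 0, 0)

end LVGGM

set_option synthInstance.maxHeartbeats 1000000
namespace StmtAux
set_option maxHeartbeats 1000000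
open LVGGM
variable {p : ℕ}

local notation "CLM" => Matrix.toEuclideanCLM (𝕜 := ℝ) (n := Fin p)

lemma clm_apply (A : Matrix (Fin p) (Fin p) ℝ) (x : EuclideanSpace ℝ (Fin p)) :
    (CLM A) x = Matrix.toEuclideanLin A x := rfl

lemma specNorm_def (A : Matrix (Fin p) (Fin p) ℝ) : specNorm A = ‖CLM A‖ := rfl

lemma specNorm_nonneg (A : Matrix (Fin p) (Fin p) ℝ) : 0 ≤ specNorm A := norm_nonneg _

lemma specNorm_add_le (A B : Matrix (Fin p) (Fin p) ℝ) :
    specNorm (A + B) ≤ specNorm A + specNorm B := by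
  simp only [specNorm_def, map_add]; exact norm_add_le _ _

lemma specNorm_neg (A : Matrix (Fin p) (Fin p) ℝ) :
    specNorm (-A) = specNorm A := by
  simp only [specNorm_def, map_neg, norm_neg]

lemma specNorm_mul_le (A B : Matrix (Fin p) (Fin p) ℝ) :
    specNorm (A * B) ≤ specNorm A * specNorm B := by
  simp only [specNorm_def, _root_.map_mul]; exact norm_mul_le _ _

lemma specNorm_smul (c : ℝ) (A : Matrix (Fin p) (Fin p) ℝ) :
    specNorm (c • A) = |c| * specNorm A := by
  simp only [specNorm_def, _root_.map_smul]
  exact (norm_smul c ((Matrix.toEuclideanCLM (𝕜 := ℝ)) A)).trans (by rw [Real.norm_eq_abs])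

lemma clm_entry (A : Matrix (Fin p) (Fin p) ℝ) (i j : Fin p) :
    ((CLM A) (EuclideanSpace.single j 1)) i = A i j := by
  rw [clm_apply, Matrix.toEuclideanLin_apply]
  show (A *ᵥ (fun k => EuclideanSpace.single j (1:ℝ) k)) i = A i j
  have h : (fun k => EuclideanSpace.single j (1:ℝ) k) = Pi.single j 1 := by
    funext k; simp [EuclideanSpace.single_apply, Pi.single_apply]
  rw [h, Matrix.mulVec_single_one]; rfl

lemma abs_entry_le_specNorm (A : Matrix (Fin p) (Fin p) ℝ) (i j : Fin p) :
    |A i j| ≤ specNorm A := by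
  have h1 : A i j = inner (𝕜 := ℝ) (EuclideanSpace.single i (1:ℝ))
      ((CLM A) (EuclideanSpace.single j 1)) := by
    rw [EuclideanSpace.inner_single_left]; simp [clm_entry]
  have e1 : ‖EuclideanSpace.single i (1:ℝ)‖ = 1 := by
    rw [EuclideanSpace.norm_single]; norm_num
  have e2 : ‖EuclideanSpace.single j (1:ℝ)‖ = 1 := by
    rw [EuclideanSpace.norm_single]; norm_num
  calc |A i j| ≤ ‖EuclideanSpace.single i (1:ℝ)‖ * ‖(CLM A) (EuclideanSpace.single j 1)‖ := by
        rw [h1]; exact abs_real_inner_le_norm _ _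
    _ ≤ 1 * (‖CLM A‖ * ‖EuclideanSpace.single j (1:ℝ)‖) := by
        apply mul_le_mul (le_of_eq e1) ((CLM A).le_opNorm _) (norm_nonneg _) (by norm_num)
    _ = specNorm A := by rw [e2, specNorm_def]; ring

lemma abs_coord_le_norm (x : EuclideanSpace ℝ (Fin p)) (j : Fin p) : |x j| ≤ ‖x‖ := by
  rw [EuclideanSpace.norm_eq]
  rw [show |x j| = Real.sqrt (‖x j‖ ^ 2) by
    rw [Real.sqrt_sq_eq_abs]; simp [Real.norm_eq_abs]]
  apply Real.sqrt_le_sqrt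
  exact Finset.single_le_sum (f := fun k => ‖x k‖ ^ 2) (fun k _ => by positivity) (Finset.mem_univ j)

lemma specNorm_le_l1 (A : Matrix (Fin p) (Fin p) ℝ) :
    specNorm A ≤ ∑ i, ∑ j, |A i j| := by
  rw [specNorm_def]
  apply ContinuousLinearMap.opNorm_le_bound
  · positivity
  intro x
  have hx : ∀ i, ‖((CLM A) x) i‖ ≤ (∑ j, |A i j|) * ‖x‖ := by
    intro i
    have he : ((CLM A) x) i = ∑ j, A i j * x j := rfl
    rw [he, Real.norm_eq_abs]
    calc |∑ j, A i j * x j| ≤ ∑ j, |A i j * x j| := Finset.abs_sum_le_sum_abs _ _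
      _ ≤ ∑ j, |A i j| * ‖x‖ := by
          apply Finset.sum_le_sum; intro j _
          rw [abs_mul]
          exact mul_le_mul_of_nonneg_left (abs_coord_le_norm x j) (abs_nonneg _)
      _ = (∑ j, |A i j|) * ‖x‖ := (Finset.sum_mul _ _ _).symm
  calc ‖(CLM A) x‖ = Real.sqrt (∑ i, ‖((CLM A) x) i‖ ^ 2) := EuclideanSpace.norm_eq _
    _ ≤ Real.sqrt ((∑ i, ‖((CLM A) x) i‖) ^ 2) := by
        apply Real.sqrt_le_sqrt
        exact Finset.sum_sq_le_sq_sum_of_nonneg (fun i _ => norm_nonneg _)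
    _ = ∑ i, ‖((CLM A) x) i‖ := Real.sqrt_sq (by positivity)
    _ ≤ ∑ i, (∑ j, |A i j|) * ‖x‖ := Finset.sum_le_sum (fun i _ => hx i)
    _ = (∑ i, ∑ j, |A i j|) * ‖x‖ := (Finset.sum_mul _ _ _).symm

lemma abs_entry_le_maxNorm (A : Matrix (Fin p) (Fin p) ℝ) (i j : Fin p) :
    |A i j| ≤ maxNorm A := by
  have h1 : |A i j| ≤ ⨆ j, |A i j| :=
    le_ciSup (f := fun j => |A i j|) (Set.Finite.bddAbove (Set.finite_range _)) j
  exact h1.trans (le_ciSup (f := fun i => ⨆ j, |A i j|)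
    (Set.Finite.bddAbove (Set.finite_range _)) i)

lemma maxNorm_nonneg (A : Matrix (Fin p) (Fin p) ℝ) : 0 ≤ maxNorm A := by
  cases isEmpty_or_nonempty (Fin p) with
  | inl h => unfold maxNorm; rw [Real.iSup_of_isEmpty]
  | inr h =>
      exact (abs_nonneg _).trans
        (abs_entry_le_maxNorm A (Classical.arbitrary _) (Classical.arbitrary _))

lemma maxNorm_le [Nonempty (Fin p)] {A : Matrix (Fin p) (Fin p) ℝ} {c : ℝ}
    (h : ∀ i j, |A i j| ≤ c) : maxNorm A ≤ c :=
  ciSup_le fun i => ciSup_le fun j => h i j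

lemma maxNorm_add_le [Nonempty (Fin p)] (A B : Matrix (Fin p) (Fin p) ℝ) :
    maxNorm (A + B) ≤ maxNorm A + maxNorm B :=
  maxNorm_le fun i j => by
    calc |(A + B) i j| = |A i j + B i j| := by rw [Matrix.add_apply]
      _ ≤ |A i j| + |B i j| := abs_add_le _ _
      _ ≤ maxNorm A + maxNorm B :=
          add_le_add (abs_entry_le_maxNorm A i j) (abs_entry_le_maxNorm B i j)

lemma maxNorm_neg (A : Matrix (Fin p) (Fin p) ℝ) : maxNorm (-A) = maxNorm A := by
  unfold maxNorm; simp [Matrix.neg_apply, abs_neg]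

lemma maxNorm_smul (c : ℝ) (A : Matrix (Fin p) (Fin p) ℝ) :
    maxNorm (c • A) = |c| * maxNorm A := by
  unfold maxNorm
  have h1 : ∀ i, (⨆ j, |(c • A) i j|) = |c| * ⨆ j, |A i j| := by
    intro i
    rw [Real.mul_iSup_of_nonneg (abs_nonneg c)]
    exact iSup_congr fun j => by rw [Matrix.smul_apply, smul_eq_mul, abs_mul]
  rw [Real.mul_iSup_of_nonneg (abs_nonneg c)]
  exact iSup_congr h1

lemma toEuclideanLin_colProj (M : Matrix (Fin p) (Fin p) ℝ) :
    Matrix.toEuclideanLin (colProj M) =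
      (LinearMap.range (Matrix.toEuclideanLin M)).subtype ∘ₗ
        (Submodule.orthogonalProjectionOnto (LinearMap.range (Matrix.toEuclideanLin M))).toLinearMap := by
  rw [Matrix.toEuclideanLin_eq_toLin_orthonormal]
  exact Matrix.toLin_toMatrix _ _ _

lemma clm_colProj_apply (M : Matrix (Fin p) (Fin p) ℝ) (x : EuclideanSpace ℝ (Fin p)) :
    (CLM (colProj M)) x =
      (Submodule.orthogonalProjectionOnto (LinearMap.range (Matrix.toEuclideanLin M)) x :
        EuclideanSpace ℝ (Fin p)) := by
  rw [clm_apply, toEuclideanLin_colProj]; rfl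

lemma specNorm_colProj_le (M : Matrix (Fin p) (Fin p) ℝ) : specNorm (colProj M) ≤ 1 := by
  rw [specNorm_def]
  apply ContinuousLinearMap.opNorm_le_bound _ zero_le_one
  intro x
  rw [clm_colProj_apply]
  calc ‖(Submodule.orthogonalProjectionOnto (LinearMap.range (Matrix.toEuclideanLin M)) x :
        EuclideanSpace ℝ (Fin p))‖
      = ‖Submodule.orthogonalProjectionOnto (LinearMap.range (Matrix.toEuclideanLin M)) x‖ := rfl
    _ ≤ ‖Submodule.orthogonalProjectionOnto (LinearMap.range (Matrix.toEuclideanLin M))‖ * ‖x‖ :=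
        ContinuousLinearMap.le_opNorm _ _
    _ ≤ 1 * ‖x‖ :=
        mul_le_mul_of_nonneg_right (Submodule.orthogonalProjectionOnto_norm_le _) (norm_nonneg _)

lemma specNorm_one_sub_colProj_le (M : Matrix (Fin p) (Fin p) ℝ) :
    specNorm (1 - colProj M) ≤ 1 := by
  rw [specNorm_def]
  apply ContinuousLinearMap.opNorm_le_bound _ zero_le_one
  intro x
  have h1 : (CLM (1 - colProj M)) x = x - (CLM (colProj M)) x := by
    rw [map_sub, _root_.map_one]; rfl
  rw [h1, clm_colProj_apply, one_mul]
  set K := LinearMap.range (Matrix.toEuclideanLin M)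
  set y : EuclideanSpace ℝ (Fin p) := (Submodule.orthogonalProjectionOnto K x : EuclideanSpace ℝ (Fin p))
  have hin : inner (𝕜 := ℝ) (x - y) y = 0 :=
    K.starProjection_inner_eq_zero x y (Submodule.orthogonalProjectionOnto K x).2
  have hsq : ‖x‖ ^ 2 = ‖y‖ ^ 2 + ‖x - y‖ ^ 2 := by
    have hin2 : inner (𝕜 := ℝ) y (x - y) = (0 : ℝ) := by
      rw [real_inner_comm]; exact hin
    have := norm_add_sq_real y (x - y)
    rw [add_sub_cancel] at this
    rw [this, hin2]; ring
  nlinarith [norm_nonneg (x - y), norm_nonneg x, norm_nonneg y]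

lemma bddAbove_mu (M₀ : Matrix (Fin p) (Fin p) ℝ) :
    BddAbove (Set.range fun N : {N : Matrix (Fin p) (Fin p) ℝ //
      N ∈ OmegaSet M₀ ∧ maxNorm N ≤ 1} => specNorm N.1) := by
  refine ⟨(p : ℝ) * (p : ℝ), ?_⟩
  rintro _ ⟨N, rfl⟩
  calc specNorm N.1 ≤ ∑ i, ∑ j, |N.1 i j| := specNorm_le_l1 _
    _ ≤ ∑ _i : Fin p, ∑ _j : Fin p, (1 : ℝ) :=
        Finset.sum_le_sum fun i _ => Finset.sum_le_sum fun j _ =>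
          (abs_entry_le_maxNorm _ i j).trans N.2.2
    _ = (p : ℝ) * (p : ℝ) := by simp [mul_comm]

lemma specNorm_le_muOmega {M₀ S : Matrix (Fin p) (Fin p) ℝ} {γ : ℝ} (hγ : 0 < γ)
    (hS : S ∈ OmegaSet M₀) (hSn : maxNorm S ≤ γ) : specNorm S ≤ muOmega M₀ * γ := by
  have hN : γ⁻¹ • S ∈ OmegaSet M₀ := fun i j h => by
    rw [Matrix.smul_apply, hS i j h, smul_zero]
  have hNn : maxNorm (γ⁻¹ • S) ≤ 1 := by
    rw [maxNorm_smul, abs_of_pos (inv_pos.mpr hγ)]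
    calc γ⁻¹ * maxNorm S ≤ γ⁻¹ * γ := mul_le_mul_of_nonneg_left hSn (inv_pos.mpr hγ).le
      _ = 1 := inv_mul_cancel₀ hγ.ne'
  have h1 : specNorm (γ⁻¹ • S) ≤ muOmega M₀ :=
    le_ciSup (bddAbove_mu M₀) (⟨γ⁻¹ • S, hN, hNn⟩ :
      {N : Matrix (Fin p) (Fin p) ℝ // N ∈ OmegaSet M₀ ∧ maxNorm N ≤ 1})
  have h2 : specNorm (γ⁻¹ • S) = γ⁻¹ * specNorm S := by
    rw [specNorm_smul, abs_of_pos (inv_pos.mpr hγ)]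
  have h3 : γ⁻¹ * specNorm S ≤ muOmega M₀ := h2 ▸ h1
  calc specNorm S = γ * (γ⁻¹ * specNorm S) := by field_simp
    _ ≤ γ * muOmega M₀ := mul_le_mul_of_nonneg_left h3 hγ.le
    _ = muOmega M₀ * γ := mul_comm _ _

lemma maxNorm_le_xiGen [Nonempty (Fin p)] {M₁ L : Matrix (Fin p) (Fin p) ℝ}
    (hL : L ∈ TsetGen M₁) (h1 : specNorm L ≤ 1) : maxNorm L ≤ xiGen M₁ := by
  have bdd : BddAbove (Set.range fun N : {N : Matrix (Fin p) (Fin p) ℝ //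
      N ∈ TsetGen M₁ ∧ specNorm N ≤ 1} => maxNorm N.1) := by
    refine ⟨1, ?_⟩
    rintro _ ⟨N, rfl⟩
    exact maxNorm_le fun i j => (abs_entry_le_specNorm N.1 i j).trans N.2.2
  exact le_ciSup bdd (⟨L, hL, h1⟩ :
    {N : Matrix (Fin p) (Fin p) ℝ // N ∈ TsetGen M₁ ∧ specNorm N ≤ 1})

end StmtAux
/-- Lemma: near-isometry of the addition operator restricted to `Ω × T`. -/
theorem statement_6 {p : ℕ} (M₀ M₁ : Matrix (Fin p) (Fin p) ℝ) (hM₁ : M₁ ≠ 0)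
    (γ : ℝ) (hγ : 0 < γ)
    (S L : Matrix (Fin p) (Fin p) ℝ)
    (hS : S ∈ LVGGM.OmegaSet M₀) (hSnorm : LVGGM.maxNorm S = γ)
    (hL : L ∈ LVGGM.TsetGen M₁) (hLnorm : LVGGM.specNorm L = 1) :
    LVGGM.gNorm γ (LVGGM.projOmega M₀ (S + L)) (LVGGM.projTgen M₁ (S + L)) ∈
      Set.Icc (1 - max (LVGGM.xiGen M₁ / γ) (2 * LVGGM.muOmega M₀ * γ))
              (1 + max (LVGGM.xiGen M₁ / γ) (2 * LVGGM.muOmega M₀ * γ)) := by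
  open LVGGM StmtAux in
  rcases Nat.eq_zero_or_pos p with hp | hp
  · subst hp
    exact absurd (by ext i j; exact i.elim0) hM₁
  · haveI : Nonempty (Fin p) := ⟨⟨0, hp⟩⟩
    -- projection identities
    have hPω : LVGGM.projOmega M₀ (S + L) = S + LVGGM.projOmega M₀ L := by
      ext i j
      by_cases h : M₀ i j = 0
      · simp [LVGGM.projOmega, h, hS i j h, Matrix.add_apply]
      · simp [LVGGM.projOmega, h, Matrix.add_apply]
    have hL0 : (1 - LVGGM.colProj M₁) * L * (1 - LVGGM.colProj M₁ᵀ) = 0 := hL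
    have hkey : LVGGM.colProj M₁ * L + L * LVGGM.colProj M₁ᵀ -
        LVGGM.colProj M₁ * L * LVGGM.colProj M₁ᵀ = L := by
      have hexp : (1 - LVGGM.colProj M₁) * L * (1 - LVGGM.colProj M₁ᵀ)
          = L - (LVGGM.colProj M₁ * L + L * LVGGM.colProj M₁ᵀ -
              LVGGM.colProj M₁ * L * LVGGM.colProj M₁ᵀ) := by noncomm_ring
      exact (sub_eq_zero.mp (hexp.symm.trans hL0)).symm
    have hPT : LVGGM.projTgen M₁ (S + L) = L + LVGGM.projTgen M₁ S := by
      show LVGGM.colProj M₁ * (S + L) + (S + L) * LVGGM.colProj M₁ᵀ -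
          LVGGM.colProj M₁ * (S + L) * LVGGM.colProj M₁ᵀ
        = L + (LVGGM.colProj M₁ * S + S * LVGGM.colProj M₁ᵀ -
            LVGGM.colProj M₁ * S * LVGGM.colProj M₁ᵀ)
      calc LVGGM.colProj M₁ * (S + L) + (S + L) * LVGGM.colProj M₁ᵀ -
          LVGGM.colProj M₁ * (S + L) * LVGGM.colProj M₁ᵀ
          = (LVGGM.colProj M₁ * L + L * LVGGM.colProj M₁ᵀ -
              LVGGM.colProj M₁ * L * LVGGM.colProj M₁ᵀ) +
            (LVGGM.colProj M₁ * S + S * LVGGM.colProj M₁ᵀ -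
              LVGGM.colProj M₁ * S * LVGGM.colProj M₁ᵀ) := by noncomm_ring
        _ = L + (LVGGM.colProj M₁ * S + S * LVGGM.colProj M₁ᵀ -
              LVGGM.colProj M₁ * S * LVGGM.colProj M₁ᵀ) := by rw [hkey]
    -- Ω part bounds
    have hprojL : LVGGM.maxNorm (LVGGM.projOmega M₀ L) ≤ LVGGM.xiGen M₁ := by
      have h1 : LVGGM.maxNorm (LVGGM.projOmega M₀ L) ≤ LVGGM.maxNorm L := by
        apply StmtAux.maxNorm_le
        intro i j
        by_cases h : M₀ i j = 0
        · simpa [LVGGM.projOmega, h] using StmtAux.maxNorm_nonneg L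
        · simpa [LVGGM.projOmega, h] using StmtAux.abs_entry_le_maxNorm L i j
      exact h1.trans (StmtAux.maxNorm_le_xiGen hL hLnorm.le)
    have haU : LVGGM.maxNorm (S + LVGGM.projOmega M₀ L) ≤ γ + LVGGM.xiGen M₁ := by
      have := StmtAux.maxNorm_add_le S (LVGGM.projOmega M₀ L)
      rw [hSnorm] at this; linarith
    have haL : γ - LVGGM.xiGen M₁ ≤ LVGGM.maxNorm (S + LVGGM.projOmega M₀ L) := by
      have h2 : LVGGM.maxNorm S ≤ LVGGM.maxNorm (S + LVGGM.projOmega M₀ L) +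
          LVGGM.maxNorm (LVGGM.projOmega M₀ L) := by
        have := StmtAux.maxNorm_add_le (S + LVGGM.projOmega M₀ L) (-(LVGGM.projOmega M₀ L))
        simpa [StmtAux.maxNorm_neg, add_neg_cancel_right] using this
      rw [hSnorm] at h2; linarith
    -- T part bounds
    have hSspec : LVGGM.specNorm S ≤ LVGGM.muOmega M₀ * γ :=
      StmtAux.specNorm_le_muOmega hγ hS hSnorm.le
    have hμγ : (0 : ℝ) ≤ LVGGM.muOmega M₀ * γ := (StmtAux.specNorm_nonneg S).trans hSspec
    have hPTS : LVGGM.specNorm (LVGGM.projTgen M₁ S) ≤ 2 * LVGGM.muOmega M₀ * γ := by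
      have hdecomp : LVGGM.projTgen M₁ S =
          LVGGM.colProj M₁ * S + (1 - LVGGM.colProj M₁) * (S * LVGGM.colProj M₁ᵀ) := by
        show LVGGM.colProj M₁ * S + S * LVGGM.colProj M₁ᵀ -
            LVGGM.colProj M₁ * S * LVGGM.colProj M₁ᵀ = _
        noncomm_ring
      have h1 : LVGGM.specNorm (LVGGM.colProj M₁ * S) ≤ 1 * (LVGGM.muOmega M₀ * γ) :=
        (StmtAux.specNorm_mul_le _ _).trans
          (mul_le_mul (StmtAux.specNorm_colProj_le M₁) hSspec (StmtAux.specNorm_nonneg _)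
            zero_le_one)
      have hsq : LVGGM.specNorm (S * LVGGM.colProj M₁ᵀ) ≤ LVGGM.muOmega M₀ * γ := by
        have := (StmtAux.specNorm_mul_le S (LVGGM.colProj M₁ᵀ)).trans
          (mul_le_mul hSspec (StmtAux.specNorm_colProj_le (M₁ᵀ))
            (StmtAux.specNorm_nonneg _) hμγ)
        linarith [this]
      have h2 : LVGGM.specNorm ((1 - LVGGM.colProj M₁) * (S * LVGGM.colProj M₁ᵀ)) ≤
          1 * (LVGGM.muOmega M₀ * γ) :=
        (StmtAux.specNorm_mul_le _ _).trans
          (mul_le_mul (StmtAux.specNorm_one_sub_colProj_le M₁) hsq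
            (StmtAux.specNorm_nonneg _) zero_le_one)
      calc LVGGM.specNorm (LVGGM.projTgen M₁ S)
          ≤ LVGGM.specNorm (LVGGM.colProj M₁ * S) +
            LVGGM.specNorm ((1 - LVGGM.colProj M₁) * (S * LVGGM.colProj M₁ᵀ)) := by
            rw [hdecomp]; exact StmtAux.specNorm_add_le _ _
        _ ≤ 1 * (LVGGM.muOmega M₀ * γ) + 1 * (LVGGM.muOmega M₀ * γ) := add_le_add h1 h2
        _ = 2 * LVGGM.muOmega M₀ * γ := by ring
    have hbU : LVGGM.specNorm (L + LVGGM.projTgen M₁ S) ≤ 1 + 2 * LVGGM.muOmega M₀ * γ := by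
      have := StmtAux.specNorm_add_le L (LVGGM.projTgen M₁ S)
      rw [hLnorm] at this; linarith
    have hbL : 1 - 2 * LVGGM.muOmega M₀ * γ ≤ LVGGM.specNorm (L + LVGGM.projTgen M₁ S) := by
      have h2 : LVGGM.specNorm L ≤ LVGGM.specNorm (L + LVGGM.projTgen M₁ S) +
          LVGGM.specNorm (LVGGM.projTgen M₁ S) := by
        have := StmtAux.specNorm_add_le (L + LVGGM.projTgen M₁ S) (-(LVGGM.projTgen M₁ S))
        simpa [StmtAux.specNorm_neg, add_neg_cancel_right] using this
      rw [hLnorm] at h2; linarith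
    -- conclusion
    have hxχ : LVGGM.xiGen M₁ / γ ≤ max (LVGGM.xiGen M₁ / γ) (2 * LVGGM.muOmega M₀ * γ) :=
      le_max_left _ _
    have hμχ : 2 * LVGGM.muOmega M₀ * γ ≤
        max (LVGGM.xiGen M₁ / γ) (2 * LVGGM.muOmega M₀ * γ) := le_max_right _ _
    rw [Set.mem_Icc]
    unfold LVGGM.gNorm
    rw [hPω, hPT]
    constructor
    · refine le_trans ?_ (le_max_left _ _)
      calc 1 - max (LVGGM.xiGen M₁ / γ) (2 * LVGGM.muOmega M₀ * γ)
          ≤ 1 - LVGGM.xiGen M₁ / γ := by linarith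
        _ = (γ - LVGGM.xiGen M₁) / γ := by rw [sub_div, div_self hγ.ne']
        _ ≤ LVGGM.maxNorm (S + LVGGM.projOmega M₀ L) / γ := by
            exact (div_le_div_iff_of_pos_right hγ).mpr haL
    · apply max_le
      · calc LVGGM.maxNorm (S + LVGGM.projOmega M₀ L) / γ
            ≤ (γ + LVGGM.xiGen M₁) / γ := by
              exact (div_le_div_iff_of_pos_right hγ).mpr haU
          _ = 1 + LVGGM.xiGen M₁ / γ := by rw [add_div, div_self hγ.ne']
          _ ≤ 1 + max (LVGGM.xiGen M₁ / γ) (2 * LVGGM.muOmega M₀ * γ) := by linarith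
      · calc LVGGM.specNorm (L + LVGGM.projTgen M₁ S) ≤ 1 + 2 * LVGGM.muOmega M₀ * γ := hbU
          _ ≤ 1 + max (LVGGM.xiGen M₁ / γ) (2 * LVGGM.muOmega M₀ * γ) := by linarith
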